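/- Let K be a field of characteristic ≠ 2 and let R = K[x₁,x₂,x₃,y₁,y₂,y₃,z₁,z₂,z₃] be the polynomial ring in 9 variables over K. Then the ideal ⟨f₁⟩ generated by f₁ = x₂z₁ + y₃z₁ - x₁z₂ - y₁z₃ and the ideal ⟨f₁, f₂⟩ generated by f₁ and f₂ = x₃y₁ - x₁y₃ + x₃z₂ - x₂z₃ + 1 are both prime ideals of R. -/

import Mathlib

open MvPolynomial

/-- `R = K[x₁,x₂,x₃,y₁,y₂,y₃,z₁,z₂,z₃]`: the variables `X 0, X 1, X 2` play the roles of
`x₁, x₂, x₃`; `X 3, X 4, X 5` of `y₁, y₂, y₃`; and `X 6, X 7, X 8` of `z₁, z₂, z₃`. -/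
noncomputable def poly_f₁ (K : Type*) [Field K] : MvPolynomial (Fin 9) K :=
  X 1 * X 6 + X 5 * X 6 - X 0 * X 7 - X 3 * X 8

noncomputable def poly_f₂ (K : Type*) [Field K] : MvPolynomial (Fin 9) K :=
  X 2 * X 3 - X 0 * X 5 + X 2 * X 7 - X 1 * X 8 + 1

theorem key_mem_span {A : Type*} [CommRing A] [IsDomain A] {a b : A}
    (ha : Prime a) (hb : ¬ a ∣ b) (p : Polynomial A)
    (hp : Polynomial.eval₂ (algebraMap A (FractionRing A))
      (algebraMap A (FractionRing A) b / algebraMap A (FractionRing A) a) p = 0) :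
    p ∈ Ideal.span {Polynomial.C a * Polynomial.X - Polynomial.C b} := by
  set i := algebraMap A (FractionRing A) with hidef
  have hi : Function.Injective i := IsFractionRing.injective A (FractionRing A)
  have ha0 : i a ≠ 0 := fun h => ha.ne_zero (hi (by simpa using h))
  set t := i b / i a with htdef
  have hgen : Polynomial.eval₂ i t (Polynomial.C a * Polynomial.X - Polynomial.C b) = 0 := by
    simp [htdef, mul_div_cancel₀ _ ha0]
  suffices H : ∀ n (p : Polynomial A), p.natDegree = n → Polynomial.eval₂ i t p = 0 →
      p ∈ Ideal.span {Polynomial.C a * Polynomial.X - Polynomial.C b} from H _ p rfl hp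
  intro n
  induction n using Nat.strong_induction_on with
  | _ n IH =>
  intro p hdeg hp
  by_cases hp0 : p = 0
  · simp [hp0]
  have e1 : ∑ j ∈ Finset.range (n + 1), i (p.coeff j) * t ^ j = 0 := by
    rw [← hdeg, ← Polynomial.eval₂_eq_sum_range]; exact hp
  have hsum : ∑ j ∈ Finset.range (n + 1), p.coeff j * b ^ j * a ^ (n - j) = 0 := by
    apply hi
    rw [map_sum, map_zero]
    have hterm : ∀ j ∈ Finset.range (n + 1),
        i (p.coeff j * b ^ j * a ^ (n - j)) = (i (p.coeff j) * t ^ j) * i a ^ n := by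
      intro j hj
      have hj' : j ≤ n := Nat.lt_succ_iff.mp (Finset.mem_range.mp hj)
      have hpow : i a ^ (n - j) * i a ^ j = i a ^ n := by
        rw [← pow_add, Nat.sub_add_cancel hj']
      rw [map_mul, map_mul, map_pow, map_pow, div_pow, ← hpow]
      field_simp
    rw [Finset.sum_congr rfl hterm, ← Finset.sum_mul, e1, zero_mul]
  rcases Nat.eq_zero_or_pos n with hn0 | hn0
  · exfalso
    subst hn0
    simp at hsum
    exact hp0 (by rw [Polynomial.eq_C_of_natDegree_eq_zero hdeg, hsum, map_zero])
  · rw [Finset.sum_range_succ, Nat.sub_self, pow_zero, mul_one] at hsum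
    have hdvd : a ∣ p.coeff n * b ^ n := by
      rw [eq_neg_of_add_eq_zero_right hsum]
      apply dvd_neg.mpr
      apply Finset.dvd_sum
      intro j hj
      exact ((dvd_pow_self a (Nat.sub_ne_zero_of_lt (Finset.mem_range.mp hj))).mul_left _)
    have hdvd2 : a ∣ p.coeff n := by
      rcases ha.2.2 _ _ hdvd with h | h
      · exact h
      · exact absurd (ha.dvd_of_dvd_pow h) hb
    obtain ⟨c, hc⟩ := hdvd2
    set q : Polynomial A := p - Polynomial.C c * Polynomial.X ^ (n - 1) * (Polynomial.C a * Polynomial.X - Polynomial.C b) with hqdef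
    have hq0' : Polynomial.eval₂ i t q = 0 := by
      rw [hqdef, Polynomial.eval₂_sub, Polynomial.eval₂_mul, hgen, mul_zero, sub_zero, hp]
    have hpq : p = q + Polynomial.C c * Polynomial.X ^ (n - 1) * (Polynomial.C a * Polynomial.X - Polynomial.C b) := by rw [hqdef]; ring
    by_cases hq0 : q = 0
    · rw [hpq, hq0, zero_add]
      exact Ideal.mul_mem_left _ _ (Ideal.subset_span (Set.mem_singleton _))
    · have hn1 : n - 1 + 1 = n := Nat.succ_pred_eq_of_pos hn0
      have hx : (Polynomial.X : Polynomial A) ^ (n - 1) * Polynomial.X = Polynomial.X ^ n := by rw [← pow_succ, hn1]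
      have hqeq : q = (p - Polynomial.C (p.coeff n) * Polynomial.X ^ n) + Polynomial.C (c * b) * Polynomial.X ^ (n - 1) := by
        rw [hqdef, hc, ← hx]; simp only [Polynomial.C_mul]; ring
      have hcn : p.coeff n ≠ 0 := by
        rw [← hdeg, Polynomial.coeff_natDegree]
        exact Polynomial.leadingCoeff_ne_zero.mpr hp0
      have hdp : p.degree = (n : WithBot ℕ) := by
        rw [Polynomial.degree_eq_natDegree hp0, hdeg]
      have hdq : (Polynomial.C (p.coeff n) * Polynomial.X ^ n : Polynomial A).degree = (n : WithBot ℕ) :=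
        Polynomial.degree_C_mul_X_pow n hcn
      have hlc : p.leadingCoeff = (Polynomial.C (p.coeff n) * Polynomial.X ^ n).leadingCoeff := by
        rw [Polynomial.leadingCoeff_C_mul_X_pow, ← hdeg, Polynomial.coeff_natDegree]
      have h1 : (p - Polynomial.C (p.coeff n) * Polynomial.X ^ n).degree < (n : WithBot ℕ) :=
        hdp ▸ Polynomial.degree_sub_lt (hdp.trans hdq.symm) hp0 hlc
      have h2 : (Polynomial.C (c * b) * Polynomial.X ^ (n - 1) : Polynomial A).degree < (n : WithBot ℕ) :=
        lt_of_le_of_lt (Polynomial.degree_C_mul_X_pow_le _ _)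
          (by exact_mod_cast Nat.sub_lt hn0 one_pos)
      have hqd : q.degree < (n : WithBot ℕ) := by
        rw [hqeq]
        exact lt_of_le_of_lt (Polynomial.degree_add_le _ _) (max_lt h1 h2)
      have hqn : q.natDegree < n := (Polynomial.natDegree_lt_iff_degree_lt hq0).mpr hqd
      have hqmem := IH _ hqn q rfl hq0'
      rw [hpq]
      exact Ideal.add_mem _ hqmem
        (Ideal.mul_mem_left _ _ (Ideal.subset_span (Set.mem_singleton _)))

theorem span_CaX_sub_Cb_isPrime {A : Type*} [CommRing A] [IsDomain A] {a b : A}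
    (ha : Prime a) (hb : ¬ a ∣ b) :
    (Ideal.span {Polynomial.C a * Polynomial.X - Polynomial.C b} : Ideal (Polynomial A)).IsPrime := by
  have hker : Ideal.span {Polynomial.C a * Polynomial.X - Polynomial.C b} =
      RingHom.ker (Polynomial.eval₂RingHom (algebraMap A (FractionRing A))
        (algebraMap A (FractionRing A) b / algebraMap A (FractionRing A) a)) := by
    apply le_antisymm
    · rw [Ideal.span_le]
      rintro x hx
      rw [Set.mem_singleton_iff] at hx
      subst hx
      have ha0 : algebraMap A (FractionRing A) a ≠ 0 := fun h =>
        ha.ne_zero ((IsFractionRing.injective A (FractionRing A)) (by simpa using h))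
      simp [RingHom.mem_ker, mul_div_cancel₀ _ ha0]
    · intro p hp
      exact key_mem_span ha hb p (by simpa [RingHom.mem_ker] using hp)
  rw [hker]
  exact RingHom.ker_isPrime _

theorem isPrime_of_map_ringEquiv {R S : Type*} [CommRing R] [CommRing S] (e : R ≃+* S)
    {I : Ideal R} (h : (I.map (e : R →+* S)).IsPrime) : I.IsPrime := by
  haveI := h
  have h2 := Ideal.comap_isPrime (e : R →+* S) (I.map (e : R →+* S))
  rwa [Ideal.comap_map_of_bijective (e : R →+* S) e.bijective] at h2

theorem prime_X_mv {K : Type*} [Field K] {n : ℕ} (i : Fin (n + 1)) :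
    Prime (MvPolynomial.X i : MvPolynomial (Fin (n + 1)) K) := by
  let e := (MvPolynomial.renameEquiv K (Equiv.swap 0 i)).trans (MvPolynomial.finSuccEquiv K n)
  rw [← MulEquiv.prime_iff e.toRingEquiv.toMulEquiv]
  have he : e.toRingEquiv.toMulEquiv (MvPolynomial.X i) = Polynomial.X := by
    show e (MvPolynomial.X i) = Polynomial.X
    simp [e, MvPolynomial.renameEquiv_apply, MvPolynomial.rename_X, Equiv.swap_apply_right,
      MvPolynomial.finSuccEquiv_X_zero]
  rw [he]
  exact Polynomial.prime_X

theorem part1 (K : Type*) [Field K] : (Ideal.span {poly_f₁ K}).IsPrime := by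
  let E := MvPolynomial.finSuccEquiv K 8
  apply isPrime_of_map_ringEquiv E.toRingEquiv
  have himg : (E.toRingEquiv : MvPolynomial (Fin 9) K →+* Polynomial (MvPolynomial (Fin 8) K))
      (poly_f₁ K) =
      -(Polynomial.C (X 6) * Polynomial.X -
        Polynomial.C (X 0 * X 5 + X 4 * X 5 - X 2 * X 7)) := by
    show E (poly_f₁ K) = _
    unfold poly_f₁
    rw [show (1 : Fin 9) = Fin.succ 0 by rfl, show (6 : Fin 9) = Fin.succ 5 by rfl,
        show (5 : Fin 9) = Fin.succ 4 by rfl, show (7 : Fin 9) = Fin.succ 6 by rfl,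
        show (3 : Fin 9) = Fin.succ 2 by rfl, show (8 : Fin 9) = Fin.succ 7 by rfl]
    simp only [map_add, map_sub, map_mul, MvPolynomial.finSuccEquiv_X_zero,
      MvPolynomial.finSuccEquiv_X_succ, E]
    ring
  rw [Ideal.map_span, Set.image_singleton, himg, Ideal.span_singleton_neg]
  have hb : ¬ (X 6 : MvPolynomial (Fin 8) K) ∣ (X 0 * X 5 + X 4 * X 5 - X 2 * X 7) := by
    rintro ⟨t, ht⟩
    have h2 := congrArg (aeval (fun j : Fin 8 => if j = 6 then 0 else X j :
      Fin 8 → MvPolynomial (Fin 8) K)) ht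
    simp at h2
    have h3 := congrArg (eval (fun j : Fin 8 => if j = 0 then 1 else if j = 5 then 1 else 0 :
      Fin 8 → K)) h2
    simp at h3
  exact span_CaX_sub_Cb_isPrime (prime_X_mv 6) hb
/-- auxiliary polynomials for part 2 -/
noncomputable def g1 (K : Type*) [Field K] : MvPolynomial (Fin 8) K :=
  X 0 * X 5 + X 4 * X 5 - X 1 * X 6 - X 2 * X 7

noncomputable def a2 (K : Type*) [Field K] : MvPolynomial (Fin 8) K := X 2 + X 6

noncomputable def b2 (K : Type*) [Field K] : MvPolynomial (Fin 8) K :=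
  X 1 * X 4 + X 0 * X 7 - 1

noncomputable def c7 (K : Type*) [Field K] : MvPolynomial (Fin 7) K :=
  X 1 * X 4 + X 3 * X 4 - X 0 * X 5 + X 5 * X 6

theorem spanC7 (K : Type*) [Field K] : (Ideal.span {c7 K}).IsPrime := by
  let E := MvPolynomial.finSuccEquiv K 6
  apply isPrime_of_map_ringEquiv E.toRingEquiv
  have himg : (E.toRingEquiv : MvPolynomial (Fin 7) K →+* Polynomial (MvPolynomial (Fin 6) K))
      (c7 K) =
      -(Polynomial.C (X 4) * Polynomial.X -
        Polynomial.C (X 0 * X 3 + X 2 * X 3 + X 4 * X 5)) := by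
    show E (c7 K) = _
    unfold c7
    rw [show (1 : Fin 7) = Fin.succ 0 by rfl, show (4 : Fin 7) = Fin.succ 3 by rfl,
        show (3 : Fin 7) = Fin.succ 2 by rfl, show (5 : Fin 7) = Fin.succ 4 by rfl,
        show (6 : Fin 7) = Fin.succ 5 by rfl]
    simp only [map_add, map_sub, map_mul, MvPolynomial.finSuccEquiv_X_zero,
      MvPolynomial.finSuccEquiv_X_succ, E]
    ring
  rw [Ideal.map_span, Set.image_singleton, himg, Ideal.span_singleton_neg]
  have hb : ¬ (X 4 : MvPolynomial (Fin 6) K) ∣ (X 0 * X 3 + X 2 * X 3 + X 4 * X 5) := by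
    rintro ⟨t, ht⟩
    have h2 := congrArg (aeval (fun j : Fin 6 => if j = 4 then 0 else X j :
      Fin 6 → MvPolynomial (Fin 6) K)) ht
    simp at h2
    have h3 := congrArg (eval (fun j : Fin 6 => if j = 0 then 1 else if j = 3 then 1 else 0 :
      Fin 6 → K)) h2
    simp at h3
  exact span_CaX_sub_Cb_isPrime (prime_X_mv 4) hb

theorem spanG1 (K : Type*) [Field K] : (Ideal.span {g1 K}).IsPrime := by
  let E := (renameEquiv K (Equiv.swap (0 : Fin 8) 6)).trans (MvPolynomial.finSuccEquiv K 7)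
  apply isPrime_of_map_ringEquiv E.toRingEquiv
  have himg : (E.toRingEquiv : MvPolynomial (Fin 8) K →+* Polynomial (MvPolynomial (Fin 7) K))
      (g1 K) =
      -(Polynomial.C (X 0) * Polynomial.X -
        Polynomial.C (X 4 * X 5 + X 3 * X 4 - X 1 * X 6)) := by
    show E (g1 K) = _
    unfold g1
    simp only [AlgEquiv.trans_apply, map_add, map_sub, map_mul, renameEquiv_apply, rename_X, E]
    rw [show (Equiv.swap (0 : Fin 8) 6) 0 = 6 by decide,
        show (Equiv.swap (0 : Fin 8) 6) 5 = 5 by decide,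
        show (Equiv.swap (0 : Fin 8) 6) 4 = 4 by decide,
        show (Equiv.swap (0 : Fin 8) 6) 1 = 1 by decide,
        show (Equiv.swap (0 : Fin 8) 6) 6 = 0 by decide,
        show (Equiv.swap (0 : Fin 8) 6) 2 = 2 by decide,
        show (Equiv.swap (0 : Fin 8) 6) 7 = 7 by decide]
    rw [show (6 : Fin 8) = Fin.succ 5 by rfl, show (5 : Fin 8) = Fin.succ 4 by rfl,
        show (4 : Fin 8) = Fin.succ 3 by rfl, show (1 : Fin 8) = Fin.succ 0 by rfl,
        show (2 : Fin 8) = Fin.succ 1 by rfl, show (7 : Fin 8) = Fin.succ 6 by rfl]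
    simp only [MvPolynomial.finSuccEquiv_X_zero, MvPolynomial.finSuccEquiv_X_succ]
    ring
  rw [Ideal.map_span, Set.image_singleton, himg, Ideal.span_singleton_neg]
  have hb : ¬ (X 0 : MvPolynomial (Fin 7) K) ∣ (X 4 * X 5 + X 3 * X 4 - X 1 * X 6) := by
    rintro ⟨t, ht⟩
    have h2 := congrArg (aeval (fun j : Fin 7 => if j = 0 then 0 else X j :
      Fin 7 → MvPolynomial (Fin 7) K)) ht
    simp at h2
    have h3 := congrArg (eval (fun j : Fin 7 => if j = 4 then 1 else if j = 5 then 1 else 0 :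
      Fin 7 → K)) h2
    simp at h3
  exact span_CaX_sub_Cb_isPrime (prime_X_mv 0) hb

theorem span_pair_C_X_eq {A : Type*} [CommRing A] (c : A) :
    (Ideal.span {Polynomial.C c, Polynomial.X} : Ideal (Polynomial A)) =
      Ideal.comap (Polynomial.evalRingHom (0 : A)) (Ideal.span {c}) := by
  apply le_antisymm
  · rw [Ideal.span_le]
    rintro q hq
    rcases hq with h | h
    · subst h
      show Polynomial.eval (0 : A) (Polynomial.C c) ∈ Ideal.span {c}
      simpa using Ideal.subset_span (Set.mem_singleton c)
    · rcases h with rfl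
      show Polynomial.eval (0 : A) Polynomial.X ∈ Ideal.span {c}
      simp
  · intro p hp
    have hp' : Polynomial.eval 0 p ∈ Ideal.span {c} := hp
    obtain ⟨t, ht⟩ := Ideal.mem_span_singleton'.mp hp'
    have h1 : (Polynomial.X : Polynomial A) ∣ p - Polynomial.C (Polynomial.eval 0 p) := by
      rw [Polynomial.X_dvd_iff]
      simp [Polynomial.coeff_zero_eq_eval_zero]
    obtain ⟨q, hq⟩ := h1
    have hrepr : p = Polynomial.X * q + Polynomial.C t * Polynomial.C c := by
      rw [← Polynomial.C_mul, ht, ← hq]; ring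
    rw [hrepr]
    exact Ideal.add_mem _
      (Ideal.mul_mem_right _ _ (Ideal.subset_span (Set.mem_insert_of_mem _ rfl)))
      (Ideal.mul_mem_left _ _ (Ideal.subset_span (Set.mem_insert _ _)))

noncomputable def tau (K : Type*) [Field K] :
    MvPolynomial (Fin 8) K ≃ₐ[K] MvPolynomial (Fin 8) K :=
  AlgEquiv.ofAlgHom
    (aeval fun j => if j = 2 then X 2 - X 6 else X j)
    (aeval fun j => if j = 2 then X 2 + X 6 else X j)
    (by
      apply MvPolynomial.algHom_ext
      intro j
      by_cases h : j = 2
      · subst h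
        simp
      · simp [h])
    (by
      apply MvPolynomial.algHom_ext
      intro j
      by_cases h : j = 2
      · subst h
        simp
      · simp [h])

theorem tau_apply {K : Type*} [Field K] (p : MvPolynomial (Fin 8) K) :
    tau K p = aeval (fun j => if j = 2 then X 2 - X 6 else X j) p := rfl

theorem spanQ (K : Type*) [Field K] : (Ideal.span {g1 K, a2 K}).IsPrime := by
  apply isPrime_of_map_ringEquiv (tau K).toRingEquiv
  rw [Ideal.map_span, Set.image_pair]
  have h1 : ((tau K).toRingEquiv : MvPolynomial (Fin 8) K →+* MvPolynomial (Fin 8) K) (g1 K) =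
      X 0 * X 5 + X 4 * X 5 - X 1 * X 6 - X 2 * X 7 + X 6 * X 7 := by
    show (tau K) (g1 K) = _
    unfold g1
    rw [tau_apply]
    simp only [map_add, map_sub, map_mul, aeval_X]
    simp only [Fin.reduceEq, reduceIte]
    ring
  have h2 : ((tau K).toRingEquiv : MvPolynomial (Fin 8) K →+* MvPolynomial (Fin 8) K) (a2 K) =
      X 2 := by
    show (tau K) (a2 K) = _
    unfold a2
    rw [tau_apply]
    simp only [map_add, aeval_X]
    simp only [Fin.reduceEq, reduceIte]
    ring
  rw [h1, h2]
  let E := (renameEquiv K (Equiv.swap (0 : Fin 8) 2)).trans (MvPolynomial.finSuccEquiv K 7)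
  apply isPrime_of_map_ringEquiv E.toRingEquiv
  rw [Ideal.map_span, Set.image_pair]
  have h3 : (E.toRingEquiv : MvPolynomial (Fin 8) K →+* Polynomial (MvPolynomial (Fin 7) K))
      (X 0 * X 5 + X 4 * X 5 - X 1 * X 6 - X 2 * X 7 + X 6 * X 7) =
      Polynomial.C (c7 K) + Polynomial.X * (-(Polynomial.C (X 6 : MvPolynomial (Fin 7) K))) := by
    show E _ = _
    unfold c7
    simp only [AlgEquiv.trans_apply, map_add, map_sub, map_mul, renameEquiv_apply, rename_X, E]
    rw [show (Equiv.swap (0 : Fin 8) 2) 0 = 2 by decide,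
        show (Equiv.swap (0 : Fin 8) 2) 5 = 5 by decide,
        show (Equiv.swap (0 : Fin 8) 2) 4 = 4 by decide,
        show (Equiv.swap (0 : Fin 8) 2) 1 = 1 by decide,
        show (Equiv.swap (0 : Fin 8) 2) 6 = 6 by decide,
        show (Equiv.swap (0 : Fin 8) 2) 2 = 0 by decide,
        show (Equiv.swap (0 : Fin 8) 2) 7 = 7 by decide]
    rw [show (6 : Fin 8) = Fin.succ 5 by rfl, show (5 : Fin 8) = Fin.succ 4 by rfl,
        show (4 : Fin 8) = Fin.succ 3 by rfl, show (1 : Fin 8) = Fin.succ 0 by rfl,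
        show (2 : Fin 8) = Fin.succ 1 by rfl, show (7 : Fin 8) = Fin.succ 6 by rfl]
    simp only [MvPolynomial.finSuccEquiv_X_zero, MvPolynomial.finSuccEquiv_X_succ]
    ring
  have h4 : (E.toRingEquiv : MvPolynomial (Fin 8) K →+* Polynomial (MvPolynomial (Fin 7) K))
      (X 2 : MvPolynomial (Fin 8) K) = Polynomial.X := by
    show E _ = _
    simp only [AlgEquiv.trans_apply, renameEquiv_apply, rename_X, E]
    rw [show (Equiv.swap (0 : Fin 8) 2) 2 = 0 by decide]
    exact MvPolynomial.finSuccEquiv_X_zero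
  rw [h3, h4, Ideal.span_pair_add_right_mul, span_pair_C_X_eq]
  haveI := spanC7 K
  exact Ideal.comap_isPrime _ _

set_option maxHeartbeats 1000000 in
set_option synthInstance.maxHeartbeats 80000 in
theorem part2 (K : Type*) [Field K] : (Ideal.span {poly_f₁ K, poly_f₂ K}).IsPrime := by
  let E := (renameEquiv K (Equiv.swap (0 : Fin 9) 2)).trans (MvPolynomial.finSuccEquiv K 8)
  apply isPrime_of_map_ringEquiv E.toRingEquiv
  rw [Ideal.map_span, Set.image_pair]
  have h1 : (E.toRingEquiv : MvPolynomial (Fin 9) K →+* Polynomial (MvPolynomial (Fin 8) K))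
      (poly_f₁ K) = Polynomial.C (g1 K) := by
    show E _ = _
    unfold poly_f₁ g1
    simp only [AlgEquiv.trans_apply, map_add, map_sub, map_mul, renameEquiv_apply, rename_X, E]
    rw [show (Equiv.swap (0 : Fin 9) 2) 1 = 1 by decide,
        show (Equiv.swap (0 : Fin 9) 2) 6 = 6 by decide,
        show (Equiv.swap (0 : Fin 9) 2) 5 = 5 by decide,
        show (Equiv.swap (0 : Fin 9) 2) 0 = 2 by decide,
        show (Equiv.swap (0 : Fin 9) 2) 7 = 7 by decide,
        show (Equiv.swap (0 : Fin 9) 2) 3 = 3 by decide,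
        show (Equiv.swap (0 : Fin 9) 2) 8 = 8 by decide]
    rw [show (1 : Fin 9) = Fin.succ 0 by rfl, show (6 : Fin 9) = Fin.succ 5 by rfl,
        show (5 : Fin 9) = Fin.succ 4 by rfl, show (2 : Fin 9) = Fin.succ 1 by rfl,
        show (7 : Fin 9) = Fin.succ 6 by rfl, show (3 : Fin 9) = Fin.succ 2 by rfl,
        show (8 : Fin 9) = Fin.succ 7 by rfl]
    simp only [MvPolynomial.finSuccEquiv_X_succ]
    try simp only [map_add, map_sub, map_mul, map_one]
    try ring
  have h2 : (E.toRingEquiv : MvPolynomial (Fin 9) K →+* Polynomial (MvPolynomial (Fin 8) K))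
      (poly_f₂ K) = Polynomial.C (a2 K) * Polynomial.X - Polynomial.C (b2 K) := by
    show E _ = _
    unfold poly_f₂ a2 b2
    simp only [AlgEquiv.trans_apply, map_add, map_sub, map_mul, map_one, renameEquiv_apply,
      rename_X, E]
    rw [show (Equiv.swap (0 : Fin 9) 2) 2 = 0 by decide,
        show (Equiv.swap (0 : Fin 9) 2) 3 = 3 by decide,
        show (Equiv.swap (0 : Fin 9) 2) 0 = 2 by decide,
        show (Equiv.swap (0 : Fin 9) 2) 5 = 5 by decide,
        show (Equiv.swap (0 : Fin 9) 2) 7 = 7 by decide,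
        show (Equiv.swap (0 : Fin 9) 2) 1 = 1 by decide,
        show (Equiv.swap (0 : Fin 9) 2) 8 = 8 by decide]
    rw [show (3 : Fin 9) = Fin.succ 2 by rfl, show (2 : Fin 9) = Fin.succ 1 by rfl,
        show (5 : Fin 9) = Fin.succ 4 by rfl, show (7 : Fin 9) = Fin.succ 6 by rfl,
        show (1 : Fin 9) = Fin.succ 0 by rfl, show (8 : Fin 9) = Fin.succ 7 by rfl]
    simp only [MvPolynomial.finSuccEquiv_X_zero, MvPolynomial.finSuccEquiv_X_succ]
    try simp only [map_add, map_sub, map_mul, map_one]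
    try ring
  rw [h1, h2]
  haveI hIg : (Ideal.span {g1 K}).IsPrime := spanG1 K
  set mkh : MvPolynomial (Fin 8) K →+* MvPolynomial (Fin 8) K ⧸ (Ideal.span {g1 K}) :=
    Ideal.Quotient.mk (Ideal.span {g1 K}) with hmkh
  have hg10 : mkh (g1 K) = 0 :=
    Ideal.Quotient.eq_zero_iff_mem.mpr (Ideal.subset_span (Set.mem_singleton _))
  have ha2ne : mkh (a2 K) ≠ 0 := by
    rw [Ne, Ideal.Quotient.eq_zero_iff_mem]
    intro hmem
    obtain ⟨t, ht⟩ := Ideal.mem_span_singleton'.mp hmem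
    have h5 := congrArg (eval (fun j : Fin 8 => if j = 2 then 1 else 0 : Fin 8 → K)) ht
    simp [g1, a2] at h5
  have hmapQ : Ideal.map mkh (Ideal.span {g1 K, a2 K}) = Ideal.span {mkh (a2 K)} := by
    rw [Ideal.map_span, Set.image_pair, hg10]
    apply le_antisymm
    · rw [Ideal.span_le]
      rintro x (rfl | h)
      · exact Ideal.zero_mem _
      · rcases h with rfl
        exact Ideal.subset_span (Set.mem_singleton _)
    · exact Ideal.span_mono (Set.subset_insert _ _)
  have hQbar : (Ideal.span {mkh (a2 K)}).IsPrime := by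
    rw [← hmapQ]
    haveI := spanQ K
    exact Ideal.map_isPrime_of_surjective Ideal.Quotient.mk_surjective
      (by rw [Ideal.mk_ker]; exact Ideal.span_mono (Set.singleton_subset_iff.mpr (Set.mem_insert _ _)))
  have hprime_a2 : Prime (mkh (a2 K)) := (Ideal.span_singleton_prime ha2ne).mp hQbar
  have hnd : ¬ mkh (a2 K) ∣ mkh (b2 K) := by
    rintro ⟨w, hw⟩
    obtain ⟨v, rfl⟩ := Ideal.Quotient.mk_surjective w
    have hmem : b2 K - a2 K * v ∈ Ideal.span {g1 K} := by
      rw [← Ideal.Quotient.eq_zero_iff_mem]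
      show mkh _ = 0
      rw [map_sub, map_mul, hw]
      ring
    have hb2mem : b2 K ∈ Ideal.span {g1 K, a2 K} := by
      have h6 : b2 K = (b2 K - a2 K * v) + a2 K * v := by ring
      rw [h6]
      exact Ideal.add_mem _
        (Ideal.span_mono (Set.singleton_subset_iff.mpr (Set.mem_insert _ _)) hmem)
        (Ideal.mul_mem_right _ _ (Ideal.subset_span (Set.mem_insert_of_mem _ rfl)))
    obtain ⟨u, v', huv⟩ := Ideal.mem_span_pair.mp hb2mem
    have h7 := congrArg (eval (fun _ : Fin 8 => 0 : Fin 8 → K)) huv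
    rw [map_add, map_mul, map_mul] at h7
    have e1 : eval (fun _ : Fin 8 => 0 : Fin 8 → K) (g1 K) = 0 := by simp [g1]
    have e2 : eval (fun _ : Fin 8 => 0 : Fin 8 → K) (a2 K) = 0 := by simp [a2]
    have e3 : eval (fun _ : Fin 8 => 0 : Fin 8 → K) (b2 K) = -1 := by simp [b2]
    rw [e1, e2, e3, mul_zero, mul_zero, add_zero] at h7
    exact one_ne_zero (neg_eq_zero.mp h7.symm)
  have hPrime2 : (Ideal.span {Polynomial.C (mkh (a2 K)) * Polynomial.X -
      Polynomial.C (mkh (b2 K))}).IsPrime := span_CaX_sub_Cb_isPrime hprime_a2 hnd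
  set Φ : Polynomial (MvPolynomial (Fin 8) K) →+*
      Polynomial ((MvPolynomial (Fin 8) K) ⧸ (Ideal.span {g1 K})) :=
    Polynomial.mapRingHom mkh with hΦ
  have hΦgen : Φ (Polynomial.C (a2 K) * Polynomial.X - Polynomial.C (b2 K)) =
      Polynomial.C (mkh (a2 K)) * Polynomial.X - Polynomial.C (mkh (b2 K)) := by
    simp [hΦ]
  have hcomap : Ideal.span {Polynomial.C (g1 K),
        Polynomial.C (a2 K) * Polynomial.X - Polynomial.C (b2 K)} =
      Ideal.comap Φ (Ideal.span {Polynomial.C (mkh (a2 K)) * Polynomial.X -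
        Polynomial.C (mkh (b2 K))}) := by
    apply le_antisymm
    · rw [Ideal.span_le]
      rintro q hq
      rcases hq with rfl | h
      · rw [SetLike.mem_coe, Ideal.mem_comap]
        have : Φ (Polynomial.C (g1 K)) = 0 := by simp [hΦ, hg10]
        rw [this]
        exact Ideal.zero_mem _
      · rcases h with rfl
        rw [SetLike.mem_coe, Ideal.mem_comap, hΦgen]
        exact Ideal.subset_span (Set.mem_singleton _)
    · intro p hp
      obtain ⟨w, hw⟩ := Ideal.mem_span_singleton'.mp hp
      obtain ⟨v, hv⟩ := Polynomial.map_surjective mkh Ideal.Quotient.mk_surjective w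
      set r := p - v * (Polynomial.C (a2 K) * Polynomial.X - Polynomial.C (b2 K)) with hr
      have hker : Φ r = 0 := by
        rw [hr, map_sub, map_mul, hΦgen]
        have : Φ v = Polynomial.map mkh v := rfl
        rw [this, hv, hw]
        ring
      have hdvd : Polynomial.C (g1 K) ∣ r := by
        rw [Polynomial.C_dvd_iff_dvd_coeff]
        intro n
        have hcn : mkh (r.coeff n) = 0 := by
          have : (Polynomial.map mkh r).coeff n = 0 := by
            rw [show Polynomial.map mkh r = Φ r from rfl, hker, Polynomial.coeff_zero]
          rwa [Polynomial.coeff_map] at this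
        exact Ideal.mem_span_singleton.mp (Ideal.Quotient.eq_zero_iff_mem.mp hcn)
      obtain ⟨s, hs⟩ := hdvd
      have hrepr : p = Polynomial.C (g1 K) * s +
          v * (Polynomial.C (a2 K) * Polynomial.X - Polynomial.C (b2 K)) := by
        rw [← hs, hr]; ring
      rw [hrepr]
      exact Ideal.add_mem _
        (Ideal.mul_mem_right _ _ (Ideal.subset_span (Set.mem_insert _ _)))
        (Ideal.mul_mem_left _ _ (Ideal.subset_span (Set.mem_insert_of_mem _ rfl)))
  rw [hcomap]
  haveI := hPrime2
  exact Ideal.comap_isPrime _ _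

/-- The ideals `⟨f₁⟩` and `⟨f₁, f₂⟩` are prime ideals of
`R = K[x₁,x₂,x₃,y₁,y₂,y₃,z₁,z₂,z₃]`. -/
theorem span_f₁_f₂_prime
    (K : Type*) [Field K] (hchar : (2 : K) ≠ 0) :
    (Ideal.span {poly_f₁ K}).IsPrime ∧
      (Ideal.span {poly_f₁ K, poly_f₂ K}).IsPrime :=
  ⟨part1 K, part2 K⟩
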